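/- Let G be a finite group acting on a topological space M such that each element of G acts as a homeomorphism, let H be a subgroup of G, and let N be a closed subset of M which is an H-subset (i.e., N ∩ (G • x) = H • x for every x ∈ N). Equip N with the subspace topology and the induced H-action, and equip the orbit spaces N/H and M/G with the quotient topologies. Then the induced map ι : N/H → M/G sending the H-orbit of x ∈ N to its G-orbit is a topological embedding. -/

import Mathlib

open Pointwise


/-- Lemma 2.5: if a finite group `G` acts by homeomorphisms on a topological space `M`,
`H ≤ G` and `N` is a closed `H`-subset of `M`, then the induced map `N/H → M/G` is a
topological embedding. -/
theorem stmt_4 {G M : Type*} [Group G] [Finite G] [TopologicalSpace M] [MulAction G M]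
    [ContinuousConstSMul G M] (H : Subgroup G) (N : Set M) (hNcl : IsClosed N)
    (hN : ∀ x ∈ N, N ∩ MulAction.orbit G x = MulAction.orbit H x) :
    Topology.IsEmbedding
      (Quot.lift
        (fun a : N => Quotient.mk (MulAction.orbitRel G M) (a : M))
        (fun a b hab => Quotient.sound (by
          obtain ⟨h, hh⟩ := hab
          exact ⟨(h : G)⁻¹, by simp [← hh]⟩)) :
        Quot (fun a b : N => ∃ h : H, (h : G) • (a : M) = (b : M)) →
          Quotient (MulAction.orbitRel G M)) := by
  set r := fun a b : N => ∃ h : H, (h : G) • (a : M) = (b : M) with hr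
  set ι := (Quot.lift
        (fun a : N => Quotient.mk (MulAction.orbitRel G M) (a : M))
        (fun a b hab => Quotient.sound (by
          obtain ⟨h, hh⟩ := hab
          exact ⟨(h : G)⁻¹, by simp [← hh]⟩)) :
        Quot r → Quotient (MulAction.orbitRel G M)) with hι
  have hcont : Continuous ι := by
    apply continuous_quot_lift
    exact (continuous_quotient_mk').comp continuous_subtype_val
  have hinj : Function.Injective ι := by
    intro a b hab
    induction a using Quot.ind with | _ x =>
    induction b using Quot.ind with | _ y =>
    have hxy : (x : M) ∈ MulAction.orbit G (y : M) := Quotient.exact hab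
    have : (x : M) ∈ MulAction.orbit H (y : M) := by
      rw [← hN y y.2]; exact ⟨x.2, hxy⟩
    obtain ⟨h, hh⟩ := this
    exact (Quot.sound ⟨h, hh⟩).symm
  have hclosed : IsClosedMap ι := by
    intro C hC
    set C' : Set N := Quot.mk r ⁻¹' C with hC'
    have hC'cl : IsClosed C' := hC.preimage continuous_quot_mk
    have hScl : IsClosed ((↑) '' C' : Set M) :=
      hNcl.isClosedEmbedding_subtypeVal.isClosedMap _ hC'cl
    set T : Set M := ⋃ g : G, g • ((↑) '' C' : Set M) with hT
    have hTcl : IsClosed T := isClosed_iUnion_of_finite fun g => hScl.smul g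
    have hTsat : Quotient.mk (MulAction.orbitRel G M) ⁻¹' (Quotient.mk _ '' T) = T := by
      ext m
      constructor
      · rintro ⟨t, ht, hmt⟩
        have : m ∈ MulAction.orbit G t := Quotient.exact hmt.symm
        obtain ⟨g, rfl⟩ := this
        obtain ⟨_, ⟨g', rfl⟩, s, hs, rfl⟩ := ht
        exact Set.mem_iUnion.2 ⟨g * g', s, hs, by simp [mul_smul]⟩
      · intro hm
        exact ⟨m, hm, rfl⟩
    have himg : ι '' C = Quotient.mk (MulAction.orbitRel G M) '' T := by
      ext q
      constructor
      · rintro ⟨c, hc, rfl⟩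
        induction c using Quot.ind with | _ x =>
        exact ⟨(x : M), Set.mem_iUnion.2 ⟨1, ⟨(x : M), ⟨x, hc, rfl⟩, one_smul _ _⟩⟩, rfl⟩
      · rintro ⟨t, ht, rfl⟩
        obtain ⟨_, ⟨g, rfl⟩, s, hs, rfl⟩ := ht
        obtain ⟨x, hx, rfl⟩ := hs
        refine ⟨Quot.mk r x, hx, ?_⟩
        show Quotient.mk (MulAction.orbitRel G M) (x : M) = Quotient.mk _ (g • (x : M))
        exact Quotient.sound ⟨g⁻¹, by simp [mul_smul]⟩
    rw [himg]
    rw [← isQuotientMap_quotient_mk'.isClosed_preimage]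
    change IsClosed (Quotient.mk (MulAction.orbitRel G M) ⁻¹' _)
    rw [hTsat]
    exact hTcl
  exact (Topology.IsClosedEmbedding.of_continuous_injective_isClosedMap hcont hinj
    hclosed).isEmbedding
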